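/- Fix an integer p ≥ 2. For every x ∈ [0,1] and all integers m, n ≥ 1, the sequences n ↦ −M̲_n(x) and n ↦ M̄_n(x) are subadditive, i.e. −M̲_{m+n}(x)·(m+n) ≤ −M̲_m(x)·m − M̲_n(x)·n and M̄_{m+n}(x)·(m+n) ≤ M̄_m(x)·m + M̄_n(x)·n; consequently the limits lim_{n→∞} M̲_n(x) and lim_{n→∞} M̄_n(x) exist. -/

import Mathlib

open Filter MeasureTheory Set
open scoped ENNReal

noncomputable section

/-- Number of words of length `n` over the alphabet `{0, …, p-1}` whose digit sum lies
strictly between `n(α-δ)` and `n(α+δ)`; this is `h(α,n,δ)`. -/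
def hcount (p n : ℕ) (α δ : ℝ) : ℕ :=
  Nat.card {w : Fin n → Fin p //
    (n : ℝ) * (α - δ) < ∑ i, ((w i : ℕ) : ℝ) ∧ (∑ i, ((w i : ℕ) : ℝ)) < n * (α + δ)}

/-- The `p`-adic entropy function
`h(α) = lim_{δ→0} limsup_{n→∞} log h(α,n,δ) / (n log p)`.
Since the inner quantity is nondecreasing in `δ`, the limit as `δ → 0⁺` equals the
infimum over `δ > 0`. -/
def entropy (p : ℕ) (α : ℝ) : ℝ :=
  ⨅ δ : {δ : ℝ // 0 < δ},
    limsup (fun n : ℕ => Real.log (hcount p n α δ) / (n * Real.log p)) atTop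

/-- Number of words of length `n` over `{0, …, p-1}` with digit sum `< n(α+δ)`;
this is `h̄(α,n,δ)`. -/
def hbarCount (p n : ℕ) (α δ : ℝ) : ℕ :=
  Nat.card {w : Fin n → Fin p // (∑ i, ((w i : ℕ) : ℝ)) < n * (α + δ)}

/-- The `p`-adic upper entropy function
`h̄(α) = lim_{δ→0} limsup_{n→∞} log h̄(α,n,δ) / (n log p)`, the limit in `δ`
being the infimum over `δ > 0` by monotonicity in `δ`. -/
def upperEntropy (p : ℕ) (α : ℝ) : ℝ :=
  ⨅ δ : {δ : ℝ // 0 < δ},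
    limsup (fun n : ℕ => Real.log (hbarCount p n α δ) / (n * Real.log p)) atTop

/-- Number of words of length `n` over `{0, …, p-1}` with digit sum `> n(α-δ)`;
this is `h̲(α,n,δ)`. -/
def hlowCount (p n : ℕ) (α δ : ℝ) : ℕ :=
  Nat.card {w : Fin n → Fin p // (n : ℝ) * (α - δ) < ∑ i, ((w i : ℕ) : ℝ)}

/-- The `p`-adic lower entropy function
`h̲(α) = lim_{δ→0} liminf_{n→∞} log h̲(α,n,δ) / (n log p)`, the limit in `δ`
being the infimum over `δ > 0` by monotonicity in `δ`. -/
def lowerEntropy (p : ℕ) (α : ℝ) : ℝ :=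
  ⨅ δ : {δ : ℝ // 0 < δ},
    liminf (fun n : ℕ => Real.log (hlowCount p n α δ) / (n * Real.log p)) atTop

/-- The `(n+1)`-th digit `x_{n+1} ∈ {0,…,p-1}` of the non-terminating `p`-adic expansion
`x = 0.x₁x₂x₃…` of `x ∈ [0,1]` (the expansion not ending in all zeros). -/
def padicDigit (p : ℕ) (x : ℝ) (n : ℕ) : ℤ :=
  (⌈x * p ^ (n + 1)⌉ - 1) - p * (⌈x * p ^ n⌉ - 1)

/-- `S_n(T^m x) = x_{m+1} + ⋯ + x_{m+n}`, the digit sum of length `n` after shifting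
`m` times. In particular `msum p x 0 n = S_n(x)`. -/
def msum (p : ℕ) (x : ℝ) (m n : ℕ) : ℤ :=
  ∑ i ∈ Finset.range n, padicDigit p x (m + i)

/-- The `n`-th lower moving digit mean `M̲ₙ(x) = liminf_{m→∞} S_n(T^m x)/n`. -/
def lowerMn (p : ℕ) (x : ℝ) (n : ℕ) : ℝ :=
  liminf (fun m : ℕ => (msum p x m n : ℝ) / n) atTop

/-- The `n`-th upper moving digit mean `M̄ₙ(x) = limsup_{m→∞} S_n(T^m x)/n`. -/
def upperMn (p : ℕ) (x : ℝ) (n : ℕ) : ℝ :=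
  limsup (fun m : ℕ => (msum p x m n : ℝ) / n) atTop

/-- The lower moving digit mean `M̲(x) = lim_{n→∞} M̲ₙ(x)`; the limit exists by
subadditivity, hence equals the `liminf`. -/
def lowerM (p : ℕ) (x : ℝ) : ℝ := liminf (fun n : ℕ => lowerMn p x n) atTop

/-- The upper moving digit mean `M̄(x) = lim_{n→∞} M̄ₙ(x)`; the limit exists by
subadditivity, hence equals the `limsup`. -/
def upperM (p : ℕ) (x : ℝ) : ℝ := limsup (fun n : ℕ => upperMn p x n) atTop

/-- The lower digit mean `A̲(x) = liminf_{n→∞} S_n(x)/n`. -/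
def lowerA (p : ℕ) (x : ℝ) : ℝ := liminf (fun n : ℕ => (msum p x 0 n : ℝ) / n) atTop

/-- The upper digit mean `Ā(x) = limsup_{n→∞} S_n(x)/n`. -/
def upperA (p : ℕ) (x : ℝ) : ℝ := limsup (fun n : ℕ => (msum p x 0 n : ℝ) / n) atTop

/-- The Banach set `B(α,β) = {x ∈ [0,1] : M̲(x) = α, M̄(x) = β}`. -/
def BanachSet (p : ℕ) (α β : ℝ) : Set ℝ :=
  {x | x ∈ Icc (0 : ℝ) 1 ∧ lowerM p x = α ∧ upperM p x = β}

section Aux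

open Filter

lemma padicDigit_nonneg' {p : ℕ} (hp : 1 ≤ p) (x : ℝ) (n : ℕ) :
    0 ≤ padicDigit p x n := by
  unfold padicDigit
  have h : (p : ℤ) * (⌈x * p ^ n⌉ - 1) < ⌈x * p ^ (n + 1)⌉ := by
    rw [Int.lt_ceil]
    have h1 : (↑(⌈x * p ^ n⌉ - 1) : ℝ) < x * p ^ n := by
      push_cast
      linarith [Int.ceil_lt_add_one (x * p ^ n)]
    have hppos : (0 : ℝ) < p := by exact_mod_cast hp
    calc ((↑((p:ℤ) * (⌈x * p ^ n⌉ - 1)) : ℝ)) = p * (↑(⌈x * p ^ n⌉ - 1) : ℝ) := by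
          push_cast; ring
    _ < p * (x * p ^ n) := by exact (mul_lt_mul_iff_right₀ hppos).2 h1
    _ = x * p ^ (n + 1) := by ring
  have h2 : (p : ℤ) * (⌈x * p ^ n⌉ - 1) + 1 ≤ ⌈x * p ^ (n + 1)⌉ := h
  linarith

lemma padicDigit_le' {p : ℕ} (hp : 1 ≤ p) (x : ℝ) (n : ℕ) :
    padicDigit p x n ≤ p - 1 := by
  unfold padicDigit
  have h : ⌈x * p ^ (n + 1)⌉ ≤ (p : ℤ) * ⌈x * p ^ n⌉ := by
    rw [Int.ceil_le]
    have h1 : x * p ^ n ≤ (⌈x * p ^ n⌉ : ℝ) := Int.le_ceil _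
    have hppos : (0 : ℝ) ≤ p := by positivity
    calc x * p ^ (n + 1) = p * (x * p ^ n) := by ring
    _ ≤ p * (⌈x * p ^ n⌉ : ℝ) := by exact mul_le_mul_of_nonneg_left h1 hppos
    _ = ((p : ℤ) * ⌈x * p ^ n⌉ : ℤ) := by push_cast; ring
  linarith

lemma msum_nonneg' {p : ℕ} (hp : 1 ≤ p) (x : ℝ) (m n : ℕ) : 0 ≤ msum p x m n :=
  Finset.sum_nonneg fun _ _ => padicDigit_nonneg' hp x _

lemma msum_le' {p : ℕ} (hp : 1 ≤ p) (x : ℝ) (m n : ℕ) : msum p x m n ≤ n * (p - 1) := by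
  calc msum p x m n ≤ ∑ _i ∈ Finset.range n, ((p : ℤ) - 1) :=
      Finset.sum_le_sum fun _ _ => padicDigit_le' hp x _
  _ = n * (p - 1) := by simp [mul_comm]; ring

lemma msum_add' (p : ℕ) (x : ℝ) (m a b : ℕ) :
    msum p x m (a + b) = msum p x m a + msum p x (m + a) b := by
  unfold msum
  rw [Finset.sum_range_add]
  congr 1
  refine Finset.sum_congr rfl fun i _ => ?_
  congr 1
  omega

lemma limsup_shift (g : ℕ → ℝ) (a : ℕ) :
    limsup (fun m => g (m + a)) atTop = limsup g atTop := by
  conv_rhs => rw [← Filter.map_add_atTop_eq_nat a]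
  simp only [Filter.limsup, Filter.map_map]
  rfl

lemma liminf_shift (g : ℕ → ℝ) (a : ℕ) :
    liminf (fun m => g (m + a)) atTop = liminf g atTop := by
  conv_rhs => rw [← Filter.map_add_atTop_eq_nat a]
  simp only [Filter.liminf, Filter.map_map]
  rfl

end Aux

/-- For an integer `p ≥ 2` and every `x ∈ [0,1]`, the sequences
`n ↦ -M̲ₙ(x)` and `n ↦ M̄ₙ(x)` are subadditive; consequently the limits
`lim_{n→∞} M̲ₙ(x)` and `lim_{n→∞} M̄ₙ(x)` exist. -/
theorem movingMean_subadditive (p : ℕ) (hp : 2 ≤ p) (x : ℝ)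
    (hx : x ∈ Icc (0 : ℝ) 1) :
    (∀ m n : ℕ, 1 ≤ m → 1 ≤ n →
      (-lowerMn p x (m + n)) * ((m : ℝ) + n) ≤
          (-lowerMn p x m) * m - lowerMn p x n * n ∧
      upperMn p x (m + n) * ((m : ℝ) + n) ≤
          upperMn p x m * m + upperMn p x n * n) ∧
    (∃ L : ℝ, Tendsto (fun n : ℕ => lowerMn p x n) atTop (nhds L)) ∧
    (∃ L : ℝ, Tendsto (fun n : ℕ => upperMn p x n) atTop (nhds L)) := by
  have hp1 : 1 ≤ p := le_trans (by norm_num) hp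
  set u : ℕ → ℕ → ℝ := fun k m => ((msum p x m k : ℤ) : ℝ) with hu
  have hub : ∀ k m, u k m ≤ k * ((p : ℝ) - 1) := by
    intro k m
    have := msum_le' hp1 x m k
    simp only [hu]
    exact_mod_cast this
  have hlb : ∀ k m, 0 ≤ u k m := by
    intro k m
    have := msum_nonneg' hp1 x m k
    simp only [hu]
    exact_mod_cast this
  have hBle : ∀ k, IsBoundedUnder (· ≤ ·) atTop (u k) := fun k =>
    isBoundedUnder_of ⟨k * ((p : ℝ) - 1), fun m => hub k m⟩
  have hBge : ∀ k, IsBoundedUnder (· ≥ ·) atTop (u k) := fun k =>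
    isBoundedUnder_of ⟨0, fun m => hlb k m⟩
  have hBle' : ∀ k a, IsBoundedUnder (· ≤ ·) atTop (fun m => u k (m + a)) := fun k a =>
    isBoundedUnder_of ⟨k * ((p : ℝ) - 1), fun m => hub k _⟩
  have hBge' : ∀ k a, IsBoundedUnder (· ≥ ·) atTop (fun m => u k (m + a)) := fun k a =>
    isBoundedUnder_of ⟨0, fun m => hlb k _⟩
  set U : ℕ → ℝ := fun k => limsup (u k) atTop with hU
  set L : ℕ → ℝ := fun k => liminf (u k) atTop with hL
  have hsplit : ∀ a b : ℕ, u (a + b) = (fun m => u a m) + (fun m => u b (m + a)) := by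
    intro a b; funext m
    simp only [hu, Pi.add_apply]
    rw [msum_add' p x m a b]
    push_cast; ring
  have hUsub : ∀ a b : ℕ, U (a + b) ≤ U a + U b := by
    intro a b
    have h1 : U (a + b) ≤ U a + limsup (fun m => u b (m + a)) atTop := by
      rw [hU]
      simp only
      rw [hsplit a b]
      exact limsup_add_le (hBge a) (hBle a)
        ((hBge' b a).isCoboundedUnder_le) (hBle' b a)
    rwa [limsup_shift (u b) a] at h1
  have hLsuper : ∀ a b : ℕ, L a + L b ≤ L (a + b) := by
    intro a b
    have h1 : L a + liminf (fun m => u b (m + a)) atTop ≤ L (a + b) := by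
      rw [hL]
      simp only
      rw [hsplit a b]
      exact le_liminf_add (hBge a) (hBle a) (hBge' b a)
        ((hBle' b a).isCoboundedUnder_ge)
    rwa [liminf_shift (u b) a] at h1
  have hL_le_U : ∀ k, L k ≤ U k := fun k => liminf_le_limsup (hBle k) (hBge k)
  have hL_nonneg : ∀ k, 0 ≤ L k := by
    intro k
    exact le_liminf_of_le ((hBle k).isCoboundedUnder_ge)
      (Eventually.of_forall fun m => hlb k m)
  have hU_le : ∀ k, U k ≤ k * ((p : ℝ) - 1) := by
    intro k
    exact limsup_le_of_le ((hBge k).isCoboundedUnder_le)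
      (Eventually.of_forall fun m => hub k m)
  have hdivmono : ∀ k : ℕ, Monotone (fun y : ℝ => y / (k : ℝ)) := by
    intro k a b hab
    simp only
    gcongr
  have hupper : ∀ k : ℕ, 1 ≤ k → upperMn p x k = U k / k := by
    intro k hk
    have h := (hdivmono k).map_limsup_of_continuousAt (F := atTop) (u k)
      ((continuous_id.div_const _).continuousAt) (hBle k) ((hBge k).isCoboundedUnder_le)
    rw [upperMn, hU]
    exact h.symm
  have hlower : ∀ k : ℕ, 1 ≤ k → lowerMn p x k = L k / k := by
    intro k hk
    have h := (hdivmono k).map_liminf_of_continuousAt (F := atTop) (u k)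
      ((continuous_id.div_const _).continuousAt) ((hBle k).isCoboundedUnder_ge) (hBge k)
    rw [lowerMn, hL]
    exact h.symm
  refine ⟨?_, ?_, ?_⟩
  · intro m n hm hn
    have hmpos : (0:ℝ) < m := by exact_mod_cast hm
    have hnpos : (0:ℝ) < n := by exact_mod_cast hn
    have hmn : (1:ℕ) ≤ m + n := le_trans hm (Nat.le_add_right m n)
    have hmnpos : (0:ℝ) < ((m + n : ℕ) : ℝ) := by positivity
    have hcast : ((m + n : ℕ) : ℝ) = (m : ℝ) + n := by push_cast; ring
    constructor
    · rw [hlower m hm, hlower n hn, hlower (m + n) hmn]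
      have hs := hLsuper m n
      rw [← hcast, neg_mul, div_mul_cancel₀ _ (ne_of_gt hmnpos), neg_mul,
        div_mul_cancel₀ _ (ne_of_gt hmpos), div_mul_cancel₀ _ (ne_of_gt hnpos)]
      linarith
    · rw [hupper m hm, hupper n hn, hupper (m + n) hmn]
      have hs := hUsub m n
      rw [← hcast, div_mul_cancel₀ _ (ne_of_gt hmnpos),
        div_mul_cancel₀ _ (ne_of_gt hmpos), div_mul_cancel₀ _ (ne_of_gt hnpos)]
      linarith
  · have hsub : Subadditive (fun k => -L k) := by
      intro a b
      have := hLsuper a b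
      simp only
      linarith
    have hL0 : L 0 = 0 := by
      have h1 := hL_nonneg 0
      have h2 := (hL_le_U 0).trans (hU_le 0)
      simp only [Nat.cast_zero, zero_mul] at h2
      linarith
    have hbdd : BddBelow (Set.range fun k : ℕ => (-L k) / k) := by
      refine ⟨-((p:ℝ) - 1), ?_⟩
      rintro y ⟨k, rfl⟩
      simp only
      rcases Nat.eq_zero_or_pos k with hk | hk
      · subst hk
        simp only [hL0, neg_zero, Nat.cast_zero, div_zero]
        have : (1:ℝ) ≤ p := by exact_mod_cast hp1
        linarith
      · have hkpos : (0:ℝ) < k := by exact_mod_cast hk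
        have h1 : L k ≤ k * ((p:ℝ) - 1) := (hL_le_U k).trans (hU_le k)
        have h2 : L k / k ≤ (p:ℝ) - 1 := by
          rw [div_le_iff₀ hkpos]
          linarith
        rw [neg_div]
        exact neg_le_neg h2
    have htends := hsub.tendsto_lim hbdd
    refine ⟨-hsub.lim, ?_⟩
    have h2 : Tendsto (fun k : ℕ => L k / k) atTop (nhds (-hsub.lim)) := by
      have h3 := htends.neg
      simp only [neg_div, neg_neg] at h3
      exact h3
    exact Filter.Tendsto.congr'
      (eventually_atTop.2 ⟨1, fun k hk => (hlower k hk).symm⟩) h2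
  · have hsub : Subadditive U := fun a b => hUsub a b
    have hbdd : BddBelow (Set.range fun k : ℕ => U k / k) := by
      refine ⟨0, ?_⟩
      rintro y ⟨k, rfl⟩
      have h1 : 0 ≤ U k := (hL_nonneg k).trans (hL_le_U k)
      positivity
    have htends := hsub.tendsto_lim hbdd
    exact ⟨hsub.lim, Filter.Tendsto.congr'
      (eventually_atTop.2 ⟨1, fun k hk => (hupper k hk).symm⟩) htends⟩
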